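/- arXiv:2511.07309 — 5 statements merged into one kernel-verified Lean document; each statement's English description precedes it below -/
import Mathlib

section
/- Let ς > 1, σ > 0 and ω > 0 be real numbers. Define the detection error probability function f : ℝ → ℝ by f(τ) = 1 − (log τ − log (max (τ − ω) (σ/ς))) / (2 · log ς). Then for every τ with σ/ς ≤ τ ≤ ς·σ one has f(τ) ≥ f(τ*), where τ* = min (ω + σ/ς) (ς·σ); that is, τ* minimizes f over the interval [σ/ς, ς·σ]. -/
theorem optimal_detection_threshold
    (ς σ ω : ℝ) (hς : 1 < ς) (hσ : 0 < σ) (hω : 0 < ω)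
    (f : ℝ → ℝ)
    (hf : ∀ τ, f τ = 1 - (Real.log τ - Real.log (max (τ - ω) (σ / ς))) / (2 * Real.log ς))
    (τstar : ℝ) (hτstar : τstar = min (ω + σ / ς) (ς * σ)) :
    ∀ τ, σ / ς ≤ τ → τ ≤ ς * σ → f τstar ≤ f τ := by
  intro τ hτ1 hτ2
  have hς0 : (0:ℝ) < ς := lt_trans one_pos hς
  have ha : (0:ℝ) < σ / ς := div_pos hσ hς0
  have hlog : 0 < Real.log ς := Real.log_pos hς
  have hτpos : 0 < τ := lt_of_lt_of_le ha hτ1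
  rw [hf, hf]
  have key : Real.log τ - Real.log (max (τ - ω) (σ / ς)) ≤
      Real.log τstar - Real.log (max (τstar - ω) (σ / ς)) := by
    rcases le_or_gt (ω + σ / ς) (ς * σ) with hcase | hcase
    · -- τstar = ω + σ/ς
      have hts : τstar = ω + σ / ς := by rw [hτstar, min_eq_left hcase]
      have hmaxstar : max (τstar - ω) (σ / ς) = σ / ς := by
        rw [hts]; simp
      rw [hmaxstar, hts]
      rcases le_or_gt τ (ω + σ / ς) with h1 | h1
      · have hmax : max (τ - ω) (σ / ς) = σ / ς :=
          max_eq_right (by linarith)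
        rw [hmax]
        have : Real.log τ ≤ Real.log (ω + σ / ς) :=
          Real.log_le_log hτpos h1
        linarith
      · have htω : σ / ς < τ - ω := by linarith
        have hmax : max (τ - ω) (σ / ς) = τ - ω := max_eq_left (le_of_lt htω)
        rw [hmax]
        have h2 : 0 < τ - ω := lt_trans ha htω
        have hmul : τ * (σ / ς) ≤ (ω + σ / ς) * (τ - ω) := by nlinarith
        have hl : Real.log (τ * (σ / ς)) ≤ Real.log ((ω + σ / ς) * (τ - ω)) :=
          Real.log_le_log (by positivity) hmul
        rw [Real.log_mul (ne_of_gt hτpos) (ne_of_gt ha),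
            Real.log_mul (by positivity) (ne_of_gt h2)] at hl
        linarith
    · -- τstar = ς * σ
      have hts : τstar = ς * σ := by rw [hτstar, min_eq_right (le_of_lt hcase)]
      have hmaxstar : max (τstar - ω) (σ / ς) = σ / ς :=
        max_eq_right (by rw [hts]; linarith)
      rw [hmaxstar, hts]
      have h1 : Real.log τ ≤ Real.log (ς * σ) := Real.log_le_log hτpos hτ2
      have h2 : Real.log (σ / ς) ≤ Real.log (max (τ - ω) (σ / ς)) :=
        Real.log_le_log ha (le_max_right _ _)
      linarith
  have hdiv : (Real.log τ - Real.log (max (τ - ω) (σ / ς))) / (2 * Real.log ς) ≤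
      (Real.log τstar - Real.log (max (τstar - ω) (σ / ς))) / (2 * Real.log ς) := by
    apply div_le_div_of_nonneg_right key  -- may need name fix
    positivity
  linarith
end

section
/- Let ς > 1, σ > 0 and ω > 0 be real numbers. Define f(τ) = 1 − (log τ − log (max (τ − ω) (σ/ς))) / (2 · log ς) and τ* = min (ω + σ/ς) (ς·σ). If ω ≤ (ς² − 1)·σ/ς then f(τ*) = 1 − log(1 + ς·ω/σ) / (2 · log ς), and if ω > (ς² − 1)·σ/ς then f(τ*) = 0. -/
theorem optimal_dep_value
    (ς σ ω : ℝ) (hς : 1 < ς) (hσ : 0 < σ) (hω : 0 < ω)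
    (f : ℝ → ℝ)
    (hf : ∀ τ, f τ = 1 - (Real.log τ - Real.log (max (τ - ω) (σ / ς))) / (2 * Real.log ς))
    (τstar : ℝ) (hτstar : τstar = min (ω + σ / ς) (ς * σ)) :
    (ω ≤ (ς ^ 2 - 1) * σ / ς → f τstar = 1 - Real.log (1 + ς * ω / σ) / (2 * Real.log ς)) ∧
    (ω > (ς ^ 2 - 1) * σ / ς → f τstar = 0) := by
  have hς0 : (0:ℝ) < ς := lt_trans one_pos hς
  have hσς : 0 < σ / ς := div_pos hσ hς0
  have hlogς : 0 < Real.log ς := Real.log_pos hς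
  constructor
  · intro h
    have hd : σ / ς * ς = σ := div_mul_cancel₀ σ (ne_of_gt hς0)
    have hle : ω + σ / ς ≤ ς * σ := by
      have hK : (ς ^ 2 - 1) * σ / ς * ς = (ς ^ 2 - 1) * σ :=
        div_mul_cancel₀ _ (ne_of_gt hς0)
      nlinarith [mul_le_mul_of_nonneg_right h (le_of_lt hς0)]
    have hτ : τstar = ω + σ / ς := by rw [hτstar, min_eq_left hle]
    have hmax : max (τstar - ω) (σ / ς) = σ / ς := by
      rw [hτ]; simp
    rw [hf, hmax, ← Real.log_div (by linarith) (ne_of_gt hσς)]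
    congr 2
    rw [hτ]
    field_simp
    ring
  · intro h
    have hd : σ / ς * ς = σ := div_mul_cancel₀ σ (ne_of_gt hς0)
    have hle : ς * σ ≤ ω + σ / ς := by
      have hK : (ς ^ 2 - 1) * σ / ς * ς = (ς ^ 2 - 1) * σ :=
        div_mul_cancel₀ _ (ne_of_gt hς0)
      nlinarith [mul_lt_mul_of_pos_right h hς0]
    have hτ : τstar = ς * σ := by rw [hτstar, min_eq_right hle]
    have hm : τstar - ω ≤ σ / ς := by
      rw [hτ]; linarith [sub_le_iff_le_add.mpr hle]
    have hmax : max (τstar - ω) (σ / ς) = σ / ς := max_eq_right hm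
    rw [hf, hmax, hτ, Real.log_mul (ne_of_gt hς0) (ne_of_gt hσ),
      Real.log_div (ne_of_gt hσ) (ne_of_gt hς0)]
    field_simp
    ring
end

section
/- Let a, b ∈ ℝ, v > 0, and ψ > 0 with 2·ψ·v < 1. Then (1/ψ) · log ( ∫ exp(ψ·(x² + y²)) d((gaussianReal a v).prod (gaussianReal b v))(x, y) ) = (a² + b²) / (1 − 2·ψ·v) − log(1 − 2·ψ·v) / ψ, where gaussianReal μ v denotes the Gaussian probability measure on ℝ with mean μ and variance v and the integral is over the product measure on ℝ × ℝ. -/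
open MeasureTheory ProbabilityTheory Real

lemma gaussian_exp_sq_integral (μ : ℝ) (v : NNReal) (hv : 0 < v) (ψ : ℝ)
    (h : 2 * ψ * (v : ℝ) < 1) :
    ∫ x, Real.exp (ψ * x ^ 2) ∂(gaussianReal μ v)
      = Real.exp (ψ * μ ^ 2 / (1 - 2 * ψ * (v : ℝ))) / Real.sqrt (1 - 2 * ψ * (v : ℝ)) := by
  set c : ℝ := 1 - 2 * ψ * (v : ℝ) with hc
  have hc0 : 0 < c := by linarith
  have hv0 : (0 : ℝ) < (v : ℝ) := hv
  have hvne : v ≠ 0 := hv.ne'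
  set v' : NNReal := ⟨(v : ℝ) / c, by positivity⟩ with hv'
  have hv'0 : (v' : ℝ) = (v : ℝ) / c := rfl
  have hv'ne : v' ≠ 0 := by
    intro hcon
    have : ((v' : NNReal) : ℝ) = 0 := by rw [hcon]; simp
    rw [hv'0] at this
    have := (div_eq_zero_iff.mp this)
    rcases this with h1 | h1 <;> nlinarith
  -- pointwise identity
  have key : ∀ x : ℝ, Real.exp (ψ * x ^ 2) * gaussianPDFReal μ v x
      = (Real.exp (ψ * μ ^ 2 / c) / Real.sqrt c) * gaussianPDFReal (μ / c) v' x := by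
    intro x
    rw [gaussianPDFReal, gaussianPDFReal, hv'0]
    have hsqrt : Real.sqrt (2 * π * ((v : ℝ) / c)) = Real.sqrt (2 * π * (v : ℝ)) / Real.sqrt c := by
      rw [show 2 * π * ((v : ℝ) / c) = (2 * π * (v : ℝ)) / c by ring,
        Real.sqrt_div (by positivity)]
    rw [hsqrt]
    have hs2 : (0 : ℝ) < Real.sqrt (2 * π * (v : ℝ)) := by
      apply Real.sqrt_pos.mpr; positivity
    have hsc : (0 : ℝ) < Real.sqrt c := Real.sqrt_pos.mpr hc0
    have hexp : ψ * x ^ 2 + -(x - μ) ^ 2 / (2 * (v : ℝ))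
        = ψ * μ ^ 2 / c + -(x - μ / c) ^ 2 / (2 * ((v : ℝ) / c)) := by
      field_simp
      ring
    have h1 : Real.exp (ψ * x ^ 2) * Real.exp (-(x - μ) ^ 2 / (2 * (v : ℝ)))
        = Real.exp (ψ * μ ^ 2 / c) * Real.exp (-(x - μ / c) ^ 2 / (2 * ((v : ℝ) / c))) := by
      rw [← Real.exp_add, ← Real.exp_add]; exact congrArg Real.exp hexp
    calc Real.exp (ψ * x ^ 2) * ((Real.sqrt (2 * π * (v : ℝ)))⁻¹ * Real.exp (-(x - μ) ^ 2 / (2 * (v : ℝ))))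
        = (Real.sqrt (2 * π * (v : ℝ)))⁻¹ * (Real.exp (ψ * x ^ 2) * Real.exp (-(x - μ) ^ 2 / (2 * (v : ℝ)))) := by ring
      _ = (Real.sqrt (2 * π * (v : ℝ)))⁻¹ * (Real.exp (ψ * μ ^ 2 / c) * Real.exp (-(x - μ / c) ^ 2 / (2 * ((v : ℝ) / c)))) := by rw [h1]
      _ = Real.exp (ψ * μ ^ 2 / c) / Real.sqrt c * ((Real.sqrt (2 * π * (v : ℝ)) / Real.sqrt c)⁻¹ * Real.exp (-(x - μ / c) ^ 2 / (2 * ((v : ℝ) / c)))) := by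
            field_simp
  rw [gaussianReal_of_var_ne_zero _ hvne]
  have hpdf : (gaussianPDF μ v) = fun x => ((Real.toNNReal (gaussianPDFReal μ v x) : NNReal) : ENNReal) := by
    funext x
    rw [gaussianPDF]
    rfl
  rw [hpdf, integral_withDensity_eq_integral_smul
    ((measurable_gaussianPDFReal μ v).real_toNNReal)]
  have : ∀ x : ℝ, (Real.toNNReal (gaussianPDFReal μ v x)) • Real.exp (ψ * x ^ 2)
      = (Real.exp (ψ * μ ^ 2 / c) / Real.sqrt c) * gaussianPDFReal (μ / c) v' x := by
    intro x
    rw [NNReal.smul_def, smul_eq_mul, Real.coe_toNNReal _ (gaussianPDFReal_nonneg μ v x),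
      mul_comm]
    exact key x
  simp_rw [this]
  rw [integral_const_mul, integral_gaussianPDFReal_eq_one _ hv'ne, mul_one]

theorem log_mgf_noncentral_chisq_two
    (a b : ℝ) (v : NNReal) (hv : 0 < v) (ψ : ℝ) (hψ : 0 < ψ)
    (h : 2 * ψ * (v : ℝ) < 1) :
    (1 / ψ) * Real.log (∫ p : ℝ × ℝ, Real.exp (ψ * (p.1 ^ 2 + p.2 ^ 2))
        ∂((gaussianReal a v).prod (gaussianReal b v)))
      = (a ^ 2 + b ^ 2) / (1 - 2 * ψ * (v : ℝ)) - Real.log (1 - 2 * ψ * (v : ℝ)) / ψ := by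
  set c : ℝ := 1 - 2 * ψ * (v : ℝ) with hc
  have hc0 : 0 < c := by linarith
  have hsplit : ∀ p : ℝ × ℝ, Real.exp (ψ * (p.1 ^ 2 + p.2 ^ 2))
      = Real.exp (ψ * p.1 ^ 2) * Real.exp (ψ * p.2 ^ 2) := by
    intro p; rw [← Real.exp_add]; ring_nf
  simp_rw [hsplit]
  rw [integral_prod_mul (fun x => Real.exp (ψ * x ^ 2)) (fun y => Real.exp (ψ * y ^ 2)),
    gaussian_exp_sq_integral a v hv ψ h, gaussian_exp_sq_integral b v hv ψ h, ← hc]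
  have hsc : (0 : ℝ) < Real.sqrt c := Real.sqrt_pos.mpr hc0
  rw [div_mul_div_comm, ← Real.exp_add, Real.log_div (Real.exp_ne_zero _) (by positivity),
    Real.log_exp, Real.log_mul hsc.ne' hsc.ne', Real.log_sqrt hc0.le]
  field_simp
  ring
end

section
/- Let h ∈ ℂ, P > 0 and σ² > 0, and define E : ℂ → ℝ by E(u) = |√P · (conj u) · h − 1|² + σ² · |u|². Then log(1 + P·|h|²/σ²) = sup over W > 0 and u ∈ ℂ of (log W − W·E(u) + 1), and the supremum is attained at u* = √P·h/(P·|h|² + σ²) and W* = 1/E(u*). -/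
theorem wmmse_rate_reformulation
    (h : ℂ) (P σ2 : ℝ) (hP : 0 < P) (hσ : 0 < σ2)
    (E : ℂ → ℝ)
    (hE : ∀ u : ℂ, E u =
      ‖(Real.sqrt P : ℂ) * (starRingEnd ℂ u) * h - 1‖ ^ 2 +
        σ2 * ‖u‖ ^ 2)
    (ustar : ℂ) (hustar : ustar = (Real.sqrt P : ℂ) * h / ((P * ‖h‖ ^ 2 + σ2) : ℝ))
    (Wstar : ℝ) (hWstar : Wstar = 1 / E ustar) :
    IsGreatest {y : ℝ | ∃ W : ℝ, 0 < W ∧ ∃ u : ℂ, y = Real.log W - W * E u + 1}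
        (Real.log (1 + P * ‖h‖ ^ 2 / σ2)) ∧
      Real.log Wstar - Wstar * E ustar + 1 = Real.log (1 + P * ‖h‖ ^ 2 / σ2) := by
  set s := Real.sqrt P with hs
  have hs2 : s ^ 2 = P := Real.sq_sqrt hP.le
  set S : ℝ := P * ‖h‖ ^ 2 + σ2 with hSdef
  have habs : ‖h‖ ^ 2 = h.re ^ 2 + h.im ^ 2 := by
    simp [Complex.sq_norm, Complex.normSq_apply]; ring
  have hSpos : 0 < S := by positivity
  -- real expansion of E
  have hEreal : ∀ u : ℂ, E u =
      (s * (u.re*h.re + u.im*h.im) - 1)^2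
      + (s * (u.re*h.im - u.im*h.re))^2 + σ2*(u.re^2+u.im^2) := by
    intro u
    rw [hE]
    simp [Complex.sq_norm, Complex.normSq_apply, Complex.mul_re, Complex.mul_im,
      Complex.sub_re, Complex.sub_im]
    ring
  -- components of ustar
  have hre : ustar.re = s * h.re / S := by
    rw [hustar]; simp [Complex.div_ofReal_re, Complex.mul_re]
  have him : ustar.im = s * h.im / S := by
    rw [hustar]; simp [Complex.div_ofReal_im, Complex.mul_im]
  have hEstar : E ustar = σ2 / S := by
    rw [hEreal, hre, him]
    have hS : S = s^2 * (h.re^2 + h.im^2) + σ2 := by rw [hSdef, habs, hs2]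
    field_simp
    rw [hS]; ring
  have hEstarpos : 0 < E ustar := by rw [hEstar]; positivity
  have hWstar' : Wstar = S / σ2 := by
    rw [hWstar, hEstar]; field_simp
  have hlog : Real.log (1 + P * ‖h‖ ^ 2 / σ2) = Real.log (S / σ2) := by
    congr 1; rw [hSdef]; field_simp; ring
  have hWpos : 0 < Wstar := by rw [hWstar']; positivity
  -- lower bound on E
  have hElb : ∀ u : ℂ, σ2 / S ≤ E u := by
    intro u
    rw [hEreal, div_le_iff₀ hSpos]
    have hS : S = s^2 * (h.re^2 + h.im^2) + σ2 := by rw [hSdef, habs, hs2]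
    rw [hS]
    nlinarith [sq_nonneg ((s^2*(h.re^2+h.im^2)+σ2) * u.re - s*h.re),
      sq_nonneg ((s^2*(h.re^2+h.im^2)+σ2) * u.im - s*h.im),
      sq_nonneg (s*(u.re*h.im - u.im*h.re)), hσ.le, sq_nonneg s,
      sq_nonneg (h.re^2+h.im^2), mul_pos hσ hSpos]
  have hattain : Real.log Wstar - Wstar * E ustar + 1 = Real.log (S / σ2) := by
    rw [hWstar', hEstar]
    have : S / σ2 * (σ2 / S) = 1 := by field_simp
    rw [this]; ring
  refine ⟨⟨⟨Wstar, hWpos, ustar, ?_⟩, ?_⟩, by rw [hattain, hlog]⟩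
  · rw [hattain, hlog]
  · rintro y ⟨W, hW, u, rfl⟩
    rw [hlog]
    have hEpos : 0 < E u := lt_of_lt_of_le (by positivity) (hElb u)
    have h1 : W * (σ2 / S) ≤ W * E u := by
      exact mul_le_mul_of_nonneg_left (hElb u) hW.le
    have h2 : Real.log (W * (σ2 / S)) ≤ W * (σ2 / S) - 1 :=
      Real.log_le_sub_one_of_pos (by positivity)
    have h3 : Real.log (W * (σ2 / S)) = Real.log W + Real.log (σ2 / S) :=
      Real.log_mul (ne_of_gt hW) (by positivity)
    have h4 : Real.log (σ2 / S) = - Real.log (S / σ2) := by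
      rw [← Real.log_inv]; congr 1; field_simp
    linarith
end

section
/- Let ς > 1, σ > 0 and ω > 0, and let μ be the measure on ℝ with density x ↦ (Set.indicator (Set.Icc (σ/ς) (ς·σ)) (fun x => 1/(2·x·log ς))) x with respect to Lebesgue measure. Then for every τ with σ/ς ≤ τ ≤ ς·σ, μ {x | x > τ} + μ {x | x < τ − ω} = 1 − (log τ − log (max (τ − ω) (σ/ς))) / (2 · log ς). -/
open MeasureTheory

theorem dep_as_measure_of_error_events
    (ς σ ω : ℝ) (hς : 1 < ς) (hσ : 0 < σ) (hω : 0 < ω)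
    (μ : Measure ℝ)
    (hμ : μ = volume.withDensity (fun x =>
      ENNReal.ofReal ((Set.Icc (σ / ς) (ς * σ)).indicator
        (fun x => 1 / (2 * x * Real.log ς)) x))) :
    ∀ τ : ℝ, σ / ς ≤ τ → τ ≤ ς * σ →
      (μ {x | x > τ}).toReal + (μ {x | x < τ - ω}).toReal
        = 1 - (Real.log τ - Real.log (max (τ - ω) (σ / ς))) / (2 * Real.log ς) := by
  intro τ hτ1 hτ2
  set a := σ / ς with ha
  set b := ς * σ with hb
  set L := Real.log ς with hL
  have hς0 : (0:ℝ) < ς := lt_trans one_pos hς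
  have hL0 : 0 < L := Real.log_pos hς
  have ha0 : 0 < a := div_pos hσ hς0
  have hτ0 : 0 < τ := lt_of_lt_of_le ha0 hτ1
  have hb0 : 0 < b := mul_pos hς0 hσ
  set m := max (τ - ω) a with hm
  have hm0 : 0 < m := lt_of_lt_of_le ha0 (le_max_right _ _)
  have hma : a ≤ m := le_max_right _ _
  have hmτ : m ≤ τ := max_le (by linarith) hτ1
  have key : ∀ s : Set ℝ, MeasurableSet s →
      (μ s).toReal = ∫ x in Set.Icc a b ∩ s, 1 / (2 * x * L) := by
    intro s hs
    rw [hμ, withDensity_apply _ hs]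
    rw [← integral_eq_lintegral_of_nonneg_ae]
    · rw [integral_indicator measurableSet_Icc, Measure.restrict_restrict measurableSet_Icc]
    · filter_upwards with x
      by_cases hx : x ∈ Set.Icc (σ/ς) (ς*σ)
      · rw [Set.indicator_of_mem hx]
        have : 0 < x := lt_of_lt_of_le ha0 hx.1
        positivity
      · exact (Set.indicator_of_notMem hx _).symm.le
    · apply Measurable.aestronglyMeasurable
      apply Measurable.indicator _ measurableSet_Icc
      exact measurable_const.div ((measurable_const.mul measurable_id).mul measurable_const)
  have comp : ∀ t u : ℝ, 0 < t → t ≤ u →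
      ∫ x in t..u, 1 / (2 * x * L) = (Real.log u - Real.log t) / (2 * L) := by
    intro t u ht htu
    have : ∀ x : ℝ, 1 / (2 * x * L) = (2 * L)⁻¹ * (1 / x) := by
      intro x
      simp only [one_div, mul_inv]
      ring
    simp_rw [this]
    rw [intervalIntegral.integral_const_mul,
      integral_one_div (by rw [Set.uIcc_of_le htu]; exact fun h => absurd h.1 (by linarith)),
      Real.log_div (by linarith) (by linarith)]
    field_simp
  have s1 : Set.Icc a b ∩ {x : ℝ | x > τ} = Set.Ioc τ b := by
    ext x
    simp only [Set.mem_inter_iff, Set.mem_Icc, Set.mem_setOf_eq, Set.mem_Ioc, gt_iff_lt]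
    constructor
    · rintro ⟨⟨_, h2⟩, h3⟩; exact ⟨h3, h2⟩
    · rintro ⟨h1, h2⟩; exact ⟨⟨le_trans hτ1 h1.le, h2⟩, h1⟩
  have s2 : Set.Icc a b ∩ {x : ℝ | x < τ - ω} = Set.Ico a m := by
    ext x
    simp only [Set.mem_inter_iff, Set.mem_Icc, Set.mem_setOf_eq, Set.mem_Ico]
    constructor
    · rintro ⟨⟨h1, h2⟩, h3⟩
      exact ⟨h1, lt_of_lt_of_le h3 (le_max_left _ _)⟩
    · rintro ⟨h1, h2⟩
      rcases lt_max_iff.mp h2 with h | h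
      · exact ⟨⟨h1, by linarith⟩, h⟩
      · linarith
  have e1 : (μ {x : ℝ | x > τ}).toReal = (Real.log b - Real.log τ) / (2 * L) := by
    rw [key _ (by exact measurableSet_Ioi : MeasurableSet {x:ℝ | x > τ}), s1,
      ← intervalIntegral.integral_of_le hτ2, comp τ b hτ0 hτ2]
  have e2 : (μ {x : ℝ | x < τ - ω}).toReal = (Real.log m - Real.log a) / (2 * L) := by
    rw [key _ (by exact measurableSet_Iio : MeasurableSet {x:ℝ | x < τ - ω}), s2,
      MeasureTheory.integral_Ico_eq_integral_Ioo, ← MeasureTheory.integral_Ioc_eq_integral_Ioo,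
      ← intervalIntegral.integral_of_le hma, comp a m ha0 hma]
  rw [e1, e2]
  have hlb : Real.log b = L + Real.log σ := by
    rw [hb, Real.log_mul (by linarith) (by linarith)]
  have hla : Real.log a = Real.log σ - L := by
    rw [ha, Real.log_div (by linarith) (by linarith)]
  rw [hlb, hla]
  field_simp
  ring
end
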